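/- Let P = e_1…e_k be an ascending path (with respect to the zero schedule) given by its arc sequence, and let 1 < i < k. If s̄(i) = k, then either the suffix e_i…e_k or the suffix e_{i+1}…e_k is ascending; if s̲(i) = 1, then either the prefix e_1…e_i or the prefix e_1…e_{i−1} is ascending. -/
import Mathlib


open Finset

namespace EV

noncomputable section

/-- Charge after traversing `i` arcs of a path with arc gains `g`, battery capacity `B`,
initial charge `b`. -/
def charge (B b : ℝ) (g : ℕ → ℝ) : ℕ → ℝ
  | 0 => b
  | i + 1 => min (charge B b g i + g i) B

/-- The traversal of the path with `n` arcs is feasible from initial charge `b`. -/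
def Feasible (B b : ℝ) (g : ℕ → ℝ) (n : ℕ) : Prop :=
  ∀ i < n, 0 ≤ charge B b g i + g i

open Classical in
/-- Maximum final charge `α_b(P)` for a path `P` with `n` arc gains `g`,
as an extended real (`⊥ = -∞` if the traversal is infeasible). -/
def alpha (B b : ℝ) (g : ℕ → ℝ) (n : ℕ) : EReal :=
  if Feasible B b g n then ((charge B b g n : ℝ) : EReal) else ⊥

/-- Gain of the `i`-th vertex (0-indexed): the sum of the first `i` arc gains. -/
def vGain (g : ℕ → ℝ) (i : ℕ) : ℝ := ∑ t ∈ Finset.range i, g t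

/-- `P` is traversable: `α_B(P) ≥ 0`, i.e. feasible from a full battery. -/
def Traversable (B : ℝ) (g : ℕ → ℝ) (n : ℕ) : Prop := Feasible B B g n

/-- `C` is a charge drop schedule for a path with `n` arcs (vertices `0,…,n`):
no drop at the first vertex, all drops nonnegative. -/
def Schedule (C : ℕ → ℝ) (n : ℕ) : Prop := C 0 = 0 ∧ ∀ i ≤ n, 0 ≤ C i

/-- Gain of vertex `i` with respect to the charge drop schedule `C`. -/
def cGain (g C : ℕ → ℝ) (i : ℕ) : ℝ := vGain g i - ∑ t ∈ Finset.range (i + 1), C t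

/-- `P` (with `n` arcs) is ascending with respect to the schedule `C`. -/
def AscendingC (B : ℝ) (g C : ℕ → ℝ) (n : ℕ) : Prop :=
  Traversable B g n ∧ ∀ i ≤ n, 0 ≤ cGain g C i ∧ cGain g C i ≤ cGain g C n

/-- `P` (with `n` arcs) is descending with respect to the schedule `C`. -/
def DescendingC (B : ℝ) (g C : ℕ → ℝ) (n : ℕ) : Prop :=
  Traversable B g n ∧ ∀ i ≤ n, cGain g C n ≤ cGain g C i ∧ cGain g C i ≤ 0

/-- `P` is monotone with respect to the schedule `C`. -/
def MonotoneC (B : ℝ) (g C : ℕ → ℝ) (n : ℕ) : Prop :=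
  AscendingC B g C n ∨ DescendingC B g C n

/-- Ascending with respect to the zero schedule. -/
def Ascending (B : ℝ) (g : ℕ → ℝ) (n : ℕ) : Prop := AscendingC B g (fun _ => 0) n

/-- Descending with respect to the zero schedule. -/
def Descending (B : ℝ) (g : ℕ → ℝ) (n : ℕ) : Prop := DescendingC B g (fun _ => 0) n

/-- Monotone with respect to the zero schedule. -/
def MonotonePath (B : ℝ) (g : ℕ → ℝ) (n : ℕ) : Prop := Ascending B g n ∨ Descending B g n

/-- The contiguous subpath whose arcs start at arc index `a`. -/
def SubPath (g : ℕ → ℝ) (a : ℕ) : ℕ → ℝ := fun t => g (a + t)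

/-- Restriction of a charge drop schedule to the subpath starting at vertex `a`:
no drop at the subpath's first vertex. -/
def restrict (C : ℕ → ℝ) (a : ℕ) : ℕ → ℝ := fun t => if t = 0 then 0 else C (a + t)

/-- First-arc-bounded with respect to a schedule `C` (no drop at the second vertex,
and all vertex gains lie between the gains of the first two vertices). -/
def FirstArcBoundedC (g C : ℕ → ℝ) (n : ℕ) : Prop :=
  C 1 = 0 ∧
    ((0 ≤ g 0 ∧ ∀ i ≤ n, 0 ≤ cGain g C i ∧ cGain g C i ≤ g 0) ∨
     (g 0 ≤ 0 ∧ ∀ i ≤ n, g 0 ≤ cGain g C i ∧ cGain g C i ≤ 0))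

/-- Last-arc-bounded with respect to a schedule `C` (no drops at the last two vertices,
and all vertex gains lie between the gains of the last two vertices). -/
def LastArcBoundedC (g C : ℕ → ℝ) (n : ℕ) : Prop :=
  C (n - 1) = 0 ∧ C n = 0 ∧
    ((0 ≤ g (n - 1) ∧ ∀ i ≤ n, cGain g C (n - 1) ≤ cGain g C i ∧ cGain g C i ≤ cGain g C n) ∨
     (g (n - 1) < 0 ∧ ∀ i ≤ n, cGain g C n ≤ cGain g C i ∧ cGain g C i ≤ cGain g C (n - 1)))

/-- First-arc-bounded (zero schedule). -/
def FirstArcBounded (g : ℕ → ℝ) (n : ℕ) : Prop := FirstArcBoundedC g (fun _ => 0) n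

/-- Last-arc-bounded (zero schedule). -/
def LastArcBounded (g : ℕ → ℝ) (n : ℕ) : Prop := LastArcBoundedC g (fun _ => 0) n

/-- Arc-bounded: first- or last-arc-bounded. -/
def ArcBounded (g : ℕ → ℝ) (n : ℕ) : Prop := FirstArcBounded g n ∨ LastArcBounded g n

/-- A funnel: arc-bounded and containing no monotone subpath of 2 or 3 consecutive arcs. -/
def Funnel (B : ℝ) (g : ℕ → ℝ) (n : ℕ) : Prop :=
  ArcBounded g n ∧ ∀ a m, (m = 2 ∨ m = 3) → a + m ≤ n → ¬ MonotonePath B (SubPath g a) m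

/-- `j = s̄(i)`: the maximal index `j ≥ i` (among arcs of a path with `n` arcs) such that
the subpath of arcs `i,…,j` is first-arc-bounded. -/
def IsSbar (g : ℕ → ℝ) (n i j : ℕ) : Prop :=
  i ≤ j ∧ j < n ∧ FirstArcBounded (SubPath g i) (j - i + 1) ∧
    ∀ j', i ≤ j' → j' < n → FirstArcBounded (SubPath g i) (j' - i + 1) → j' ≤ j

/-- `j = s̲(i)`: the minimal index `j ≤ i` such that the subpath of arcs `j,…,i`
is last-arc-bounded. -/
def IsSlow (g : ℕ → ℝ) (n i j : ℕ) : Prop :=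
  j ≤ i ∧ i < n ∧ LastArcBounded (SubPath g j) (i - j + 1) ∧
    ∀ j', j' ≤ i → LastArcBounded (SubPath g j') (i - j' + 1) → j ≤ j'

/-- Arc gains of the walk around a cycle with `m` arc gains `g`, starting at vertex `a`. -/
def cyc (g : ℕ → ℝ) (m a : ℕ) : ℕ → ℝ := fun t => g ((a + t) % m)

/-- A walk of length `ℓ` from `x` to `y` in the directed graph with arc relation `A`. -/
def IsWalk {V : Type*} (A : V → V → Prop) (w : ℕ → V) (ℓ : ℕ) (x y : V) : Prop :=
  w 0 = x ∧ w ℓ = y ∧ ∀ t < ℓ, A (w t) (w (t + 1))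

/-- The sequence of arc gains induced by a walk `w` in a graph with gain function `g`. -/
def walkGains {V : Type*} (g : V → V → ℝ) (w : ℕ → V) : ℕ → ℝ :=
  fun t => g (w t) (w (t + 1))

lemma cGain_zero (g : ℕ → ℝ) (i : ℕ) : cGain g (fun _ => 0) i = vGain g i := by
  simp [cGain]

lemma vGain_succ (g : ℕ → ℝ) (j : ℕ) : vGain g (j + 1) = vGain g j + g j :=
  Finset.sum_range_succ _ _

lemma vGain_subPath (g : ℕ → ℝ) (i : ℕ) : ∀ j, vGain (SubPath g i) j = vGain g (i + j) - vGain g i := by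
  intro j
  induction j with
  | zero => simp [vGain]
  | succ j ih =>
      rw [vGain_succ, ih, show i + (j + 1) = (i + j) + 1 from rfl, vGain_succ]
      simp [SubPath]
      ring

lemma charge_le_capacity (B b : ℝ) (hb : b ≤ B) (g : ℕ → ℝ) (t : ℕ) :
    charge B b g t ≤ B := by
  cases t with
  | zero => exact hb
  | succ t => exact min_le_right _ _

lemma charge_mono (B : ℝ) {b b' : ℝ} (h : b ≤ b') (g : ℕ → ℝ) (t : ℕ) :
    charge B b g t ≤ charge B b' g t := by
  induction t with
  | zero => exact h
  | succ t ih => exact min_le_min (by linarith) le_rfl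

lemma charge_shift (B b : ℝ) (g : ℕ → ℝ) (i : ℕ) (t : ℕ) :
    charge B b g (i + t) = charge B (charge B b g i) (SubPath g i) t := by
  induction t with
  | zero => rfl
  | succ t ih =>
      rw [show i + (t + 1) = (i + t) + 1 from rfl]
      show min (charge B b g (i + t) + g (i + t)) B = _
      rw [ih]
      rfl

lemma feasible_suffix (B : ℝ) (g : ℕ → ℝ) (n i : ℕ) (h : Feasible B B g n) :
    Feasible B B (SubPath g i) (n - i) := by
  intro t ht
  have hit : i + t < n := by omega
  have h1 := h (i + t) hit
  have h2 : charge B B g (i + t) ≤ charge B B (SubPath g i) t := by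
    rw [charge_shift]
    exact charge_mono B (charge_le_capacity B B le_rfl g i) _ t
  have : SubPath g i t = g (i + t) := rfl
  rw [this]
  linarith

/-- Let `P = e_0 … e_{n-1}` be ascending and `1 ≤ i`, `i + 1 < n`.
If `s̄(i) = n - 1` then the suffix `e_i … e_{n-1}` or `e_{i+1} … e_{n-1}` is ascending;
if `s̲(i) = 0` then the prefix `e_0 … e_i` or `e_0 … e_{i-1}` is ascending. -/
theorem maximal_arcBounded_ascending (B : ℝ) (hB : 0 < B) (g : ℕ → ℝ) (n : ℕ)
    (hP : Ascending B g n) (i : ℕ) (h1 : 1 ≤ i) (h2 : i + 1 < n) :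
    (IsSbar g n i (n - 1) →
      Ascending B (SubPath g i) (n - i) ∨ Ascending B (SubPath g (i + 1)) (n - (i + 1))) ∧
    (IsSlow g n i 0 →
      Ascending B g (i + 1) ∨ Ascending B g i) := by
  obtain ⟨hTrav, hAsc⟩ := hP
  simp only [cGain_zero] at hAsc
  constructor
  · -- suffix part
    rintro ⟨hij, hjn, hFAB, -⟩
    have hFAB' : FirstArcBounded (SubPath g i) (n - i) := by
      rwa [show n - 1 - i + 1 = n - i from by omega] at hFAB
    obtain ⟨-, hcase⟩ := hFAB'
    simp only [cGain_zero, vGain_subPath] at hcase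
    have hg0 : SubPath g i 0 = g i := by simp [SubPath]
    rcases hcase with ⟨hpos, hbd⟩ | ⟨hneg, hbd⟩
    · left
      refine ⟨feasible_suffix B g n i hTrav, ?_⟩
      intro j hj
      simp only [cGain_zero, vGain_subPath]
      have hb := hbd j hj
      have hlast : i + (n - i) = n := by omega
      have := (hAsc (i + j) (by omega)).2
      rw [hlast]
      constructor
      · linarith [hb.1]
      · linarith
    · right
      refine ⟨feasible_suffix B g n (i + 1) hTrav, ?_⟩
      intro j hj
      simp only [cGain_zero, vGain_subPath]
      have hb := hbd (j + 1) (by omega)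
      rw [hg0] at hb
      have hlast : i + 1 + (n - (i + 1)) = n := by omega
      have h2' := (hAsc (i + 1 + j) (by omega)).2
      rw [hlast]
      have hv1 : vGain g (i + 1) = vGain g i + g i := vGain_succ g i
      have hsh : i + (j + 1) = i + 1 + j := by omega
      rw [hsh] at hb
      constructor
      · linarith [hb.1]
      · linarith
  · -- prefix part
    rintro ⟨-, -, hLAB, -⟩
    have hsub : SubPath g 0 = g := by funext t; simp [SubPath]
    rw [hsub, show i - 0 + 1 = i + 1 from by omega] at hLAB
    obtain ⟨-, -, hcase⟩ := hLAB
    simp only [cGain_zero, show i + 1 - 1 = i from by omega] at hcase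
    rcases hcase with ⟨hpos, hbd⟩ | ⟨hneg, hbd⟩
    · left
      refine ⟨fun t ht => hTrav t (by omega), ?_⟩
      intro j hj
      simp only [cGain_zero]
      exact ⟨(hAsc j (by omega)).1, (hbd j hj).2⟩
    · right
      refine ⟨fun t ht => hTrav t (by omega), ?_⟩
      intro j hj
      simp only [cGain_zero]
      exact ⟨(hAsc j (by omega)).1, (hbd j (by omega)).2⟩

end

end EV
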